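/- Let ε > 0, θe > 0, α > 0, and ξ ∈ ℝ³ with ξ ≠ 0, and let {ξ1, ξ2} be an orthonormal basis of the plane ξ^⊥ with ξ1 × ξ2 = ξ/|ξ|. Set λ_± := ±(1 + |ξ|² + ε²/θe²)^{1/2} and define the vectors e_± := ( |ξ| ξ2 / λ_±, ξ1, −i ξ1/λ_±, 0, (iε/θe) ξ1/λ_±, 0 ) and e'_± := ( −|ξ| ξ1 / λ_±, ξ2, −i ξ2/λ_±, 0, (iε/θe) ξ2/λ_±, 0 ) in ℂ^14. Then A_0(ε,ξ) e_± = λ_± e_± and A_0(ε,ξ) e'_± = λ_± e'_±; that is, e_± and e'_± are eigenvectors of the Euler–Maxwell symbol at u = 0 associated with the transverse Klein–Gordon eigenvalues λ_±. -/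

import Mathlib

noncomputable section

open scoped Matrix

/-- The state space `ℂ³ × ℂ³ × ℂ³ × ℂ × ℂ³ × ℂ` of the linearized Euler–Maxwell system,
with coordinates `(B, E, v_e, n_e, v_i, n_i)`. -/
abbrev EMSpace :=
  (Fin 3 → ℂ) × (Fin 3 → ℂ) × (Fin 3 → ℂ) × ℂ × (Fin 3 → ℂ) × ℂ

/-- Complexification of a real frequency vector. -/
def ξC (ξ : Fin 3 → ℝ) : Fin 3 → ℂ := fun i => (ξ i : ℂ)

/-- The Euler–Maxwell symbol `A₀(ε,ξ)` at `u = 0`, acting on `(B,E,v_e,n_e,v_i,n_i)` by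
`A₀(ε,ξ)u = (ξ×E, −ξ×B + i v_e − i(ε/θe) v_i, −i E + θe ξ n_e, θe ξ·v_e,
i(ε/θe) E + εα ξ n_i, εα ξ·v_i)`. -/
def emSymbol (ε θe α : ℝ) (ξ : Fin 3 → ℝ) (u : EMSpace) : EMSpace :=
  ( crossProduct (ξC ξ) u.2.1,
    -(crossProduct (ξC ξ) u.1) + Complex.I • u.2.2.1
      - (Complex.I * ((ε / θe : ℝ) : ℂ)) • u.2.2.2.2.1,
    -(Complex.I • u.2.1) + ((θe : ℂ) * u.2.2.2.1) • ξC ξ,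
    (θe : ℂ) * ∑ i, ξC ξ i * u.2.2.1 i,
    (Complex.I * ((ε / θe : ℝ) : ℂ)) • u.2.1 + (((ε * α : ℝ) : ℂ) * u.2.2.2.2.2) • ξC ξ,
    ((ε * α : ℝ) : ℂ) * ∑ i, ξC ξ i * u.2.2.2.2.1 i )

/-- The convection operator `diag(0, 0, x I₃, x, y I₃, y)`. -/
def emConvection (x y : ℝ) (u : EMSpace) : EMSpace :=
  (0, 0, (x : ℂ) • u.2.2.1, (x : ℂ) * u.2.2.2.1,
    (y : ℂ) • u.2.2.2.2.1, (y : ℂ) * u.2.2.2.2.2)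

/-- Euclidean length of a real 3-vector. -/
def len3 (ξ : Fin 3 → ℝ) : ℝ := Real.sqrt (∑ i, ξ i ^ 2)

/-- Real dot product. -/
def dot3 (a b : Fin 3 → ℝ) : ℝ := ∑ i, a i * b i

set_option maxHeartbeats 1000000 in
/-- **Transverse Klein–Gordon eigenvectors of the Euler–Maxwell symbol at `u = 0`.**
Let `ξ ≠ 0`, `{ξ1, ξ2}` an orthonormal basis of `ξ^⊥` with `ξ1 × ξ2 = ξ/|ξ|`, and
`λ_± = ±√(1+|ξ|²+ε²/θe²)`. The vectors
`e_± = (|ξ|ξ2/λ_±, ξ1, −iξ1/λ_±, 0, (iε/θe)ξ1/λ_±, 0)` and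
`e'_± = (−|ξ|ξ1/λ_±, ξ2, −iξ2/λ_±, 0, (iε/θe)ξ2/λ_±, 0)` satisfy
`A₀(ε,ξ) e_± = λ_± e_±` and `A₀(ε,ξ) e'_± = λ_± e'_±`. -/
theorem stmt_15 (ε θe α : ℝ) (hε : 0 < ε) (hθe : 0 < θe) (hα : 0 < α)
    (ξ ξ1 ξ2 : Fin 3 → ℝ) (hξ : ξ ≠ 0)
    (hξ1 : len3 ξ1 = 1) (hξ2 : len3 ξ2 = 1)
    (hperp1 : dot3 ξ ξ1 = 0) (hperp2 : dot3 ξ ξ2 = 0) (hperp12 : dot3 ξ1 ξ2 = 0)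
    (hcross : crossProduct ξ1 ξ2 = (len3 ξ)⁻¹ • ξ)
    (sgn : ℝ) (hsgn : sgn = 1 ∨ sgn = -1) :
    let lam : ℝ := sgn * Real.sqrt (1 + len3 ξ ^ 2 + ε ^ 2 / θe ^ 2)
    let e : EMSpace :=
      ( ((len3 ξ / lam : ℝ) : ℂ) • ξC ξ2, ξC ξ1,
        (-Complex.I / (lam : ℂ)) • ξC ξ1, 0,
        (Complex.I * ((ε / θe : ℝ) : ℂ) / (lam : ℂ)) • ξC ξ1, 0 )
    let e' : EMSpace :=
      ( (-(len3 ξ / lam : ℝ) : ℂ) • ξC ξ1, ξC ξ2,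
        (-Complex.I / (lam : ℂ)) • ξC ξ2, 0,
        (Complex.I * ((ε / θe : ℝ) : ℂ) / (lam : ℂ)) • ξC ξ2, 0 )
    emSymbol ε θe α ξ e = (lam : ℂ) • e ∧ emSymbol ε θe α ξ e' = (lam : ℂ) • e' := by
  intro lam e e'
  set L := len3 ξ with hLdef
  have hsum : (0:ℝ) ≤ ∑ i, ξ i ^ 2 := by positivity
  have hsne : (∑ i, ξ i ^ 2) ≠ 0 := by
    intro h
    apply hξ
    funext i
    have h2 := (Finset.sum_eq_zero_iff_of_nonneg (fun j _ => sq_nonneg (ξ j))).1 h i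
      (Finset.mem_univ i)
    exact pow_eq_zero_iff two_ne_zero |>.1 h2
  have hLpos : 0 < L := by
    rw [hLdef, len3]
    exact Real.sqrt_pos.2 (lt_of_le_of_ne hsum (Ne.symm hsne))
  have hL2 : L ^ 2 = ξ 0 ^ 2 + ξ 1 ^ 2 + ξ 2 ^ 2 := by
    rw [hLdef, len3, Real.sq_sqrt hsum, Fin.sum_univ_three]
  have hlam2 : lam ^ 2 = 1 + L ^ 2 + ε ^ 2 / θe ^ 2 := by
    have h0 : (0:ℝ) ≤ 1 + L ^ 2 + ε ^ 2 / θe ^ 2 := by positivity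
    rcases hsgn with h1 | h1 <;> simp only [lam, h1, mul_pow] <;>
      rw [Real.sq_sqrt h0] <;> ring
  have hlamne : lam ≠ 0 := by
    intro h
    rw [h] at hlam2
    have h1 : (0:ℝ) ≤ ε ^ 2 / θe ^ 2 := by positivity
    nlinarith [sq_nonneg L]
  have hlamC : (lam : ℂ) ≠ 0 := Complex.ofReal_ne_zero.2 hlamne
  have hb : ξ1 0 ^ 2 + ξ1 1 ^ 2 + ξ1 2 ^ 2 = 1 := by
    have h := Real.sq_sqrt (show (0:ℝ) ≤ ∑ i, ξ1 i ^ 2 by positivity)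
    rw [show Real.sqrt (∑ i, ξ1 i ^ 2) = 1 from hξ1] at h
    rw [Fin.sum_univ_three] at h
    linarith
  have hc : ξ2 0 ^ 2 + ξ2 1 ^ 2 + ξ2 2 ^ 2 = 1 := by
    have h := Real.sq_sqrt (show (0:ℝ) ≤ ∑ i, ξ2 i ^ 2 by positivity)
    rw [show Real.sqrt (∑ i, ξ2 i ^ 2) = 1 from hξ2] at h
    rw [Fin.sum_univ_three] at h
    linarith
  have hp1 : ξ 0 * ξ1 0 + ξ 1 * ξ1 1 + ξ 2 * ξ1 2 = 0 := by
    have := hperp1; rwa [dot3, Fin.sum_univ_three] at this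
  have hp2 : ξ 0 * ξ2 0 + ξ 1 * ξ2 1 + ξ 2 * ξ2 2 = 0 := by
    have := hperp2; rwa [dot3, Fin.sum_univ_three] at this
  have hp12 : ξ1 0 * ξ2 0 + ξ1 1 * ξ2 1 + ξ1 2 * ξ2 2 = 0 := by
    have := hperp12; rwa [dot3, Fin.sum_univ_three] at this
  have hacross : ∀ i, ξ i = L * (crossProduct ξ1 ξ2) i := by
    intro i
    have := congrFun hcross i
    rw [this]
    simp [hLpos.ne']
  have ha0 : ξ 0 = L * (ξ1 1 * ξ2 2 - ξ1 2 * ξ2 1) := by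
    have := hacross 0; rwa [cross_apply] at this
  have ha1 : ξ 1 = L * (ξ1 2 * ξ2 0 - ξ1 0 * ξ2 2) := by
    have := hacross 1; rwa [cross_apply] at this
  have ha2 : ξ 2 = L * (ξ1 0 * ξ2 1 - ξ1 1 * ξ2 0) := by
    have := hacross 2; rwa [cross_apply] at this
  -- real cross facts
  have k10 : ξ 1 * ξ1 2 - ξ 2 * ξ1 1 = L * ξ2 0 := by
    linear_combination ξ1 2 * ha1 - ξ1 1 * ha2 + L * ξ2 0 * hb - L * ξ1 0 * hp12
  have k11 : ξ 2 * ξ1 0 - ξ 0 * ξ1 2 = L * ξ2 1 := by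
    linear_combination ξ1 0 * ha2 - ξ1 2 * ha0 + L * ξ2 1 * hb - L * ξ1 1 * hp12
  have k12 : ξ 0 * ξ1 1 - ξ 1 * ξ1 0 = L * ξ2 2 := by
    linear_combination ξ1 1 * ha0 - ξ1 0 * ha1 + L * ξ2 2 * hb - L * ξ1 2 * hp12
  have k20 : ξ 1 * ξ2 2 - ξ 2 * ξ2 1 = -(L * ξ1 0) := by
    linear_combination ξ2 2 * ha1 - ξ2 1 * ha2 + L * ξ2 0 * hp12 - L * ξ1 0 * hc
  have k21 : ξ 2 * ξ2 0 - ξ 0 * ξ2 2 = -(L * ξ1 1) := by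
    linear_combination ξ2 0 * ha2 - ξ2 2 * ha0 + L * ξ2 1 * hp12 - L * ξ1 1 * hc
  have k22 : ξ 0 * ξ2 1 - ξ 1 * ξ2 0 = -(L * ξ1 2) := by
    linear_combination ξ2 1 * ha0 - ξ2 0 * ha1 + L * ξ2 2 * hp12 - L * ξ1 2 * hc
  have k10' : ((ξ 1:ℝ):ℂ) * ξ1 2 - (ξ 2:ℝ) * ξ1 1 = (L:ℝ) * ξ2 0 := by exact_mod_cast k10
  have k11' : ((ξ 2:ℝ):ℂ) * ξ1 0 - (ξ 0:ℝ) * ξ1 2 = (L:ℝ) * ξ2 1 := by exact_mod_cast k11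
  have k12' : ((ξ 0:ℝ):ℂ) * ξ1 1 - (ξ 1:ℝ) * ξ1 0 = (L:ℝ) * ξ2 2 := by exact_mod_cast k12
  have k20' : ((ξ 1:ℝ):ℂ) * ξ2 2 - (ξ 2:ℝ) * ξ2 1 = -((L:ℝ) * ξ1 0) := by exact_mod_cast k20
  have k21' : ((ξ 2:ℝ):ℂ) * ξ2 0 - (ξ 0:ℝ) * ξ2 2 = -((L:ℝ) * ξ1 1) := by exact_mod_cast k21
  have k22' : ((ξ 0:ℝ):ℂ) * ξ2 1 - (ξ 1:ℝ) * ξ2 0 = -((L:ℝ) * ξ1 2) := by exact_mod_cast k22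
  have hp1' : ((ξ 0:ℝ):ℂ) * ξ1 0 + (ξ 1:ℝ) * ξ1 1 + (ξ 2:ℝ) * ξ1 2 = 0 := by exact_mod_cast hp1
  have hp2' : ((ξ 0:ℝ):ℂ) * ξ2 0 + (ξ 1:ℝ) * ξ2 1 + (ξ 2:ℝ) * ξ2 2 = 0 := by exact_mod_cast hp2
  have hlam2' : ((lam:ℝ):ℂ) ^ 2 = 1 + (L:ℝ) ^ 2 + (ε:ℝ) ^ 2 / (θe:ℝ) ^ 2 := by
    push_cast
    exact_mod_cast hlam2
  have hI := Complex.I_sq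
  have hθeC : (θe : ℂ) ≠ 0 := Complex.ofReal_ne_zero.2 hθe.ne'
  have hlam2R : lam ^ 2 * θe ^ 2 = θe ^ 2 + L ^ 2 * θe ^ 2 + ε ^ 2 := by
    rw [hlam2]; field_simp
  have hlam2c : ((lam:ℝ):ℂ) ^ 2 * (θe:ℝ) ^ 2 = ((θe:ℝ):ℂ) ^ 2 + ((L:ℝ):ℂ) ^ 2 * (θe:ℝ) ^ 2 + ((ε:ℝ):ℂ) ^ 2 := by
    exact_mod_cast hlam2R
  constructor
  · simp only [emSymbol, e, Prod.smul_mk, Prod.mk.injEq]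
    refine ⟨?_, ?_, ?_, ?_, ?_, ?_⟩
    · funext i
      fin_cases i
      · simp only [cross_apply, ξC, Pi.smul_apply, smul_eq_mul, Matrix.cons_val_zero, Matrix.cons_val_one, Matrix.head_cons, Matrix.cons_val_two, Matrix.tail_cons]
        push_cast
        field_simp [hlamC, hθeC]
        linear_combination k10'
      · simp only [cross_apply, ξC, Pi.smul_apply, smul_eq_mul, Matrix.cons_val_zero, Matrix.cons_val_one, Matrix.head_cons, Matrix.cons_val_two, Matrix.tail_cons]
        push_cast
        field_simp [hlamC, hθeC]
        linear_combination k11'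
      · simp only [cross_apply, ξC, Pi.smul_apply, smul_eq_mul, Matrix.cons_val_zero, Matrix.cons_val_one, Matrix.head_cons, Matrix.cons_val_two, Matrix.tail_cons]
        push_cast
        field_simp [hlamC, hθeC]
        linear_combination k12'
    · funext i
      fin_cases i
      · simp only [cross_apply, ξC, Pi.smul_apply, smul_eq_mul, Pi.add_apply, Pi.sub_apply, Pi.neg_apply, Matrix.cons_val_zero, Matrix.cons_val_one, Matrix.head_cons, Matrix.cons_val_two, Matrix.tail_cons]
        push_cast
        field_simp [hlamC, hθeC]
        linear_combination (-((L:ℝ):ℂ) * ((θe:ℝ):ℂ)^2) * k20' - (((θe:ℝ):ℂ)^2 + ((ε:ℝ):ℂ)^2) * ((ξ1 0:ℝ):ℂ) * hI - ((ξ1 0:ℝ):ℂ) * hlam2c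
      · simp only [cross_apply, ξC, Pi.smul_apply, smul_eq_mul, Pi.add_apply, Pi.sub_apply, Pi.neg_apply, Matrix.cons_val_zero, Matrix.cons_val_one, Matrix.head_cons, Matrix.cons_val_two, Matrix.tail_cons]
        push_cast
        field_simp [hlamC, hθeC]
        linear_combination (-((L:ℝ):ℂ) * ((θe:ℝ):ℂ)^2) * k21' - (((θe:ℝ):ℂ)^2 + ((ε:ℝ):ℂ)^2) * ((ξ1 1:ℝ):ℂ) * hI - ((ξ1 1:ℝ):ℂ) * hlam2c
      · simp only [cross_apply, ξC, Pi.smul_apply, smul_eq_mul, Pi.add_apply, Pi.sub_apply, Pi.neg_apply, Matrix.cons_val_zero, Matrix.cons_val_one, Matrix.head_cons, Matrix.cons_val_two, Matrix.tail_cons]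
        push_cast
        field_simp [hlamC, hθeC]
        linear_combination (-((L:ℝ):ℂ) * ((θe:ℝ):ℂ)^2) * k22' - (((θe:ℝ):ℂ)^2 + ((ε:ℝ):ℂ)^2) * ((ξ1 2:ℝ):ℂ) * hI - ((ξ1 2:ℝ):ℂ) * hlam2c
    · funext i
      fin_cases i <;>
        (simp only [ξC, Pi.smul_apply, smul_eq_mul, Pi.add_apply, Pi.neg_apply, Pi.zero_apply, mul_zero, zero_mul, zero_smul, add_zero] <;> push_cast <;> field_simp [hlamC, hθeC] <;> ring)
    · simp only [ξC, Pi.smul_apply, smul_eq_mul, Fin.sum_univ_three, smul_zero, mul_zero]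
      push_cast
      field_simp [hlamC, hθeC]
      linear_combination (-Complex.I * ((θe:ℝ):ℂ)) * hp1'
    · funext i
      fin_cases i <;>
        (simp only [ξC, Pi.smul_apply, smul_eq_mul, Pi.add_apply, Pi.neg_apply, Pi.zero_apply, mul_zero, zero_mul, zero_smul, add_zero] <;> push_cast <;> field_simp [hlamC, hθeC] <;> ring)
    · simp only [ξC, Pi.smul_apply, smul_eq_mul, Fin.sum_univ_three, smul_zero, mul_zero]
      push_cast
      field_simp [hlamC, hθeC]
      linear_combination (Complex.I * ((ε:ℝ):ℂ)^2 * ((α:ℝ):ℂ)) * hp1'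
  · simp only [emSymbol, e', Prod.smul_mk, Prod.mk.injEq]
    refine ⟨?_, ?_, ?_, ?_, ?_, ?_⟩
    · funext i
      fin_cases i
      · simp only [cross_apply, ξC, Pi.smul_apply, smul_eq_mul, Matrix.cons_val_zero, Matrix.cons_val_one, Matrix.head_cons, Matrix.cons_val_two, Matrix.tail_cons]
        push_cast
        field_simp [hlamC, hθeC]
        linear_combination k20'
      · simp only [cross_apply, ξC, Pi.smul_apply, smul_eq_mul, Matrix.cons_val_zero, Matrix.cons_val_one, Matrix.head_cons, Matrix.cons_val_two, Matrix.tail_cons]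
        push_cast
        field_simp [hlamC, hθeC]
        linear_combination k21'
      · simp only [cross_apply, ξC, Pi.smul_apply, smul_eq_mul, Matrix.cons_val_zero, Matrix.cons_val_one, Matrix.head_cons, Matrix.cons_val_two, Matrix.tail_cons]
        push_cast
        field_simp [hlamC, hθeC]
        linear_combination k22'
    · funext i
      fin_cases i
      · simp only [cross_apply, ξC, Pi.smul_apply, smul_eq_mul, Pi.add_apply, Pi.sub_apply, Pi.neg_apply, Matrix.cons_val_zero, Matrix.cons_val_one, Matrix.head_cons, Matrix.cons_val_two, Matrix.tail_cons]
        push_cast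
        field_simp [hlamC, hθeC]
        linear_combination (((L:ℝ):ℂ) * ((θe:ℝ):ℂ)^2) * k10' - (((θe:ℝ):ℂ)^2 + ((ε:ℝ):ℂ)^2) * ((ξ2 0:ℝ):ℂ) * hI - ((ξ2 0:ℝ):ℂ) * hlam2c
      · simp only [cross_apply, ξC, Pi.smul_apply, smul_eq_mul, Pi.add_apply, Pi.sub_apply, Pi.neg_apply, Matrix.cons_val_zero, Matrix.cons_val_one, Matrix.head_cons, Matrix.cons_val_two, Matrix.tail_cons]
        push_cast
        field_simp [hlamC, hθeC]
        linear_combination (((L:ℝ):ℂ) * ((θe:ℝ):ℂ)^2) * k11' - (((θe:ℝ):ℂ)^2 + ((ε:ℝ):ℂ)^2) * ((ξ2 1:ℝ):ℂ) * hI - ((ξ2 1:ℝ):ℂ) * hlam2c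
      · simp only [cross_apply, ξC, Pi.smul_apply, smul_eq_mul, Pi.add_apply, Pi.sub_apply, Pi.neg_apply, Matrix.cons_val_zero, Matrix.cons_val_one, Matrix.head_cons, Matrix.cons_val_two, Matrix.tail_cons]
        push_cast
        field_simp [hlamC, hθeC]
        linear_combination (((L:ℝ):ℂ) * ((θe:ℝ):ℂ)^2) * k12' - (((θe:ℝ):ℂ)^2 + ((ε:ℝ):ℂ)^2) * ((ξ2 2:ℝ):ℂ) * hI - ((ξ2 2:ℝ):ℂ) * hlam2c
    · funext i
      fin_cases i <;>
        (simp only [ξC, Pi.smul_apply, smul_eq_mul, Pi.add_apply, Pi.neg_apply, Pi.zero_apply, mul_zero, zero_mul, zero_smul, add_zero] <;> push_cast <;> field_simp [hlamC, hθeC] <;> ring)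
    · simp only [ξC, Pi.smul_apply, smul_eq_mul, Fin.sum_univ_three, smul_zero, mul_zero]
      push_cast
      field_simp [hlamC, hθeC]
      linear_combination (-Complex.I * ((θe:ℝ):ℂ)) * hp2'
    · funext i
      fin_cases i <;>
        (simp only [ξC, Pi.smul_apply, smul_eq_mul, Pi.add_apply, Pi.neg_apply, Pi.zero_apply, mul_zero, zero_mul, zero_smul, add_zero] <;> push_cast <;> field_simp [hlamC, hθeC] <;> ring)
    · simp only [ξC, Pi.smul_apply, smul_eq_mul, Fin.sum_univ_three, smul_zero, mul_zero]
      push_cast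
      field_simp [hlamC, hθeC]
      linear_combination (Complex.I * ((ε:ℝ):ℂ)^2 * ((α:ℝ):ℂ)) * hp2'


end
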